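/- For every integer n ≥ 3, n ≡ 1 (mod 3) if and only if ε_Δ(OP_n) = 1; in particular, for n ≡ 1 (mod 3) there exists a maximal outerplanar graph G of order n and a single edge of G whose duplication yields a triangle decomposable multigraph, while no maximal outerplanar graph of order n is itself triangle decomposable. -/

import Mathlib

set_option linter.unnecessarySeqFocus false


/-- A triangle on three distinct vertices, as a multiset of edges. -/
def IsTriangle {V : Type*} (t : Multiset (Sym2 V)) : Prop :=
  ∃ a b c : V, a ≠ b ∧ b ≠ c ∧ a ≠ c ∧ t = {s(a, b), s(b, c), s(a, c)}

/-- A multigraph (multiset of edges) is triangle decomposable if it is a sum of triangles. -/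
def TriDecomp {V : Type*} (E : Multiset (Sym2 V)) : Prop :=
  ∃ T : Multiset (Multiset (Sym2 V)), (∀ t ∈ T, IsTriangle t) ∧ T.sum = E

/-- The edge multiset of a simple graph on a finite vertex type. -/
noncomputable def edgeMS {V : Type*} [Fintype V] (G : SimpleGraph V) : Multiset (Sym2 V) :=
  G.edgeSet.toFinite.toFinset.val

/-- `ε_Δ(G)`: the least number of duplicated edges of `G` (a multiset of edges of `G`,
repetitions allowed) whose addition makes the edge multiset triangle decomposable. -/
noncomputable def epsDelta {V : Type*} [Fintype V] (G : SimpleGraph V) : ℕ :=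
  sInf {k | ∃ D : Multiset (Sym2 V), D.card = k ∧ (∀ e ∈ D, e ∈ G.edgeSet) ∧
    TriDecomp (edgeMS G + D)}

/-- The edge set of the simple-clique 2-tree construction on `Fin n`: start with the
triangle on `0,1,2`, and each vertex `k ≥ 3` is attached to the two vertices `a k, b k`. -/
def mopEdges (n : ℕ) (hn : 3 ≤ n) (a b : Fin n → Fin n) : Set (Sym2 (Fin n)) :=
  {e | e = s(⟨0, by omega⟩, ⟨1, by omega⟩) ∨ e = s(⟨1, by omega⟩, ⟨2, by omega⟩) ∨
       e = s(⟨0, by omega⟩, ⟨2, by omega⟩) ∨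
       ∃ k : Fin n, 3 ≤ (k : ℕ) ∧ (e = s(k, a k) ∨ e = s(k, b k))}

/-- `G` is a maximal outerplanar graph (equivalently, a simple-clique 2-tree):
it is built from a triangle by repeatedly adding a new vertex adjacent to exactly the two
endpoints of an existing edge, each edge being used as an attachment edge at most once. -/
def IsMOP {n : ℕ} (G : SimpleGraph (Fin n)) : Prop :=
  ∃ (hn : 3 ≤ n) (a b : Fin n → Fin n),
    (∀ k : Fin n, 3 ≤ (k : ℕ) → (a k : ℕ) < k ∧ (b k : ℕ) < k ∧ a k ≠ b k) ∧
    (∀ k : Fin n, 3 ≤ (k : ℕ) → s(a k, b k) ∈ mopEdges n hn a b) ∧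
    (∀ k l : Fin n, 3 ≤ (k : ℕ) → 3 ≤ (l : ℕ) → k ≠ l → s(a k, b k) ≠ s(a l, b l)) ∧
    G = SimpleGraph.fromEdgeSet (mopEdges n hn a b)

/-- `ε_Δ(OP_n) = min { ε_Δ(G) : G a maximal outerplanar graph of order n }`. -/
noncomputable def epsOP (n : ℕ) : ℕ :=
  sInf {m | ∃ G : SimpleGraph (Fin n), IsMOP G ∧ epsDelta G = m}

lemma triDecomp_dvd {V : Type*} {E : Multiset (Sym2 V)} (h : TriDecomp E) :
    3 ∣ Multiset.card E := by
  obtain ⟨T, hT, rfl⟩ := h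
  induction T using Multiset.induction with
  | empty => simp
  | cons t T ih =>
    simp only [Multiset.sum_cons, Multiset.card_add]
    obtain ⟨a, b, c, _, _, _, rfl⟩ := hT t (Multiset.mem_cons_self ..)
    have h2 := ih (fun u hu => hT u (Multiset.mem_cons_of_mem hu))
    have h1 : Multiset.card ({s(a,b), s(b,c), s(a,c)} : Multiset (Sym2 V)) = 3 := rfl
    omega

lemma mem_msum {α : Type*} {T : Multiset (Multiset α)} {x : α} :
    x ∈ T.sum ↔ ∃ t ∈ T, x ∈ t := by
  induction T using Multiset.induction with
  | empty => simp
  | cons t T ih => simp [Multiset.sum_cons, ih]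
    
lemma mem_edgeMS {V : Type*} [Fintype V] {G : SimpleGraph V} {e : Sym2 V} :
    e ∈ edgeMS G ↔ e ∈ G.edgeSet := by
  simp [edgeMS, Set.Finite.mem_toFinset]

lemma nodup_edgeMS {V : Type*} [Fintype V] (G : SimpleGraph V) : (edgeMS G).Nodup :=
  Finset.nodup _



def Vx (n : ℕ) (h : 0 < n) (v : ℕ) : Fin n := ⟨v % n, Nat.mod_lt _ h⟩

lemma Vx_val {n : ℕ} (h : 0 < n) {v : ℕ} (hv : v < n) : (Vx n h v : ℕ) = v :=
  Nat.mod_eq_of_lt hv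

def gE (n : ℕ) (hn : 3 ≤ n) (a b : Fin n → Fin n) (i : ℕ) : Sym2 (Fin n) :=
  if i = 0 then s(Vx n (by omega) 0, Vx n (by omega) 1)
  else if i = 1 then s(Vx n (by omega) 1, Vx n (by omega) 2)
  else if i = 2 then s(Vx n (by omega) 0, Vx n (by omega) 2)
  else if i % 2 = 1 then s(Vx n (by omega) ((i+3)/2), a (Vx n (by omega) ((i+3)/2)))
  else s(Vx n (by omega) ((i+3)/2), b (Vx n (by omega) ((i+3)/2)))

section
variable {n : ℕ} (hn : 3 ≤ n) (a b : Fin n → Fin n)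

lemma gE_odd (h0 : 0 < n) {i : ℕ} (h3 : 3 ≤ i) (hp : i % 2 = 1) :
    gE n hn a b i = s(Vx n h0 ((i+3)/2), a (Vx n h0 ((i+3)/2))) := by
  rw [gE, if_neg (by omega), if_neg (by omega), if_neg (by omega), if_pos hp]

lemma gE_even (h0 : 0 < n) {i : ℕ} (h3 : 3 ≤ i) (hp : i % 2 = 0) :
    gE n hn a b i = s(Vx n h0 ((i+3)/2), b (Vx n h0 ((i+3)/2))) := by
  rw [gE, if_neg (by omega), if_neg (by omega), if_neg (by omega), if_neg (by omega)]


lemma Vx_eq_k {k : Fin n} (h0 : 0 < n) {v : ℕ} (hv : v = (k : ℕ)) : Vx n h0 v = k := by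
  apply Fin.ext
  rw [Vx]
  simp only [hv]
  exact Nat.mod_eq_of_lt k.isLt

lemma gE_at_a {k : Fin n} (h3 : 3 ≤ (k : ℕ)) :
    gE n hn a b (2*(k:ℕ)-3) = s(k, a k) := by
  rw [gE_odd hn a b (by omega) (by omega) (by omega), Vx_eq_k (k := k) _ (by omega)]

lemma gE_at_b {k : Fin n} (h3 : 3 ≤ (k : ℕ)) :
    gE n hn a b (2*(k:ℕ)-2) = s(k, b k) := by
  rw [gE_even hn a b (by omega) (by omega) (by omega), Vx_eq_k (k := k) _ (by omega)]

end

section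
variable {n : ℕ} (hn : 3 ≤ n) {a b : Fin n → Fin n}

lemma gE_0 : gE n hn a b 0 = s((⟨0, by omega⟩ : Fin n), ⟨1, by omega⟩) := by
  show (if (0:ℕ) = 0 then _ else _) = _
  rw [if_pos rfl, Vx_eq_k (k := ⟨0, by omega⟩) _ rfl, Vx_eq_k (k := ⟨1, by omega⟩) _ rfl]

lemma gE_1 : gE n hn a b 1 = s((⟨1, by omega⟩ : Fin n), ⟨2, by omega⟩) := by
  show (if (1:ℕ) = 0 then _ else if (1:ℕ) = 1 then _ else _) = _
  rw [if_neg (by omega), if_pos rfl,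
    Vx_eq_k (k := ⟨1, by omega⟩) _ rfl, Vx_eq_k (k := ⟨2, by omega⟩) _ rfl]

lemma gE_2 : gE n hn a b 2 = s((⟨0, by omega⟩ : Fin n), ⟨2, by omega⟩) := by
  show (if (2:ℕ) = 0 then _ else if (2:ℕ) = 1 then _ else if (2:ℕ) = 2 then _ else _) = _
  rw [if_neg (by omega), if_neg (by omega), if_pos rfl,
    Vx_eq_k (k := ⟨0, by omega⟩) _ rfl, Vx_eq_k (k := ⟨2, by omega⟩) _ rfl]

variable (hab : ∀ k : Fin n, 3 ≤ (k : ℕ) → (a k : ℕ) < k ∧ (b k : ℕ) < k ∧ a k ≠ b k)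

include hab in
lemma mop_no_diag : ∀ e ∈ mopEdges n hn a b, ¬ e.IsDiag := by
  rintro e (rfl | rfl | rfl | ⟨k, hk, rfl | rfl⟩) <;>
    simp only [Sym2.mk_isDiag_iff] <;> intro h
  · exact absurd (congrArg Fin.val h) (by simp)
  · exact absurd (congrArg Fin.val h) (by simp)
  · exact absurd (congrArg Fin.val h) (by simp)
  · have := (hab k hk).1; have := congrArg Fin.val h; omega
  · have := (hab k hk).2.1; have := congrArg Fin.val h; omega

include hab in
lemma mop_edgeSet :
    (SimpleGraph.fromEdgeSet (mopEdges n hn a b)).edgeSet = mopEdges n hn a b := by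
  rw [SimpleGraph.edgeSet_fromEdgeSet]
  ext e
  simp only [Set.mem_diff, Set.mem_setOf_eq, and_iff_left_iff_imp]
  exact fun he => mop_no_diag hn hab e he

lemma mem_mop_iff_gE {e : Sym2 (Fin n)} :
    e ∈ mopEdges n hn a b ↔ ∃ i < 2*n-3, gE n hn a b i = e := by
  constructor
  · rintro (rfl | rfl | rfl | ⟨k, hk, rfl | rfl⟩)
    · exact ⟨0, by omega, gE_0 hn⟩
    · exact ⟨1, by omega, gE_1 hn⟩
    · exact ⟨2, by omega, gE_2 hn⟩
    · exact ⟨2*(k:ℕ)-3, by have := k.isLt; omega, gE_at_a hn a b hk⟩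
    · exact ⟨2*(k:ℕ)-2, by have := k.isLt; omega, gE_at_b hn a b hk⟩
  · rintro ⟨i, hi, rfl⟩
    rcases Nat.lt_or_ge i 3 with h3 | h3
    · interval_cases i
      · rw [gE_0 hn]; left; rfl
      · rw [gE_1 hn]; right; left; rfl
      · rw [gE_2 hn]; right; right; left; rfl
    · right; right; right
      refine ⟨Vx n (by omega) ((i+3)/2), ?_, ?_⟩
      · rw [Vx_val _ (by omega)]; omega
      · rcases Nat.even_or_odd i with he | ho
        · right; rw [gE_even hn a b (by omega) h3 (Nat.even_iff.mp he)]
        · left; rw [gE_odd hn a b (by omega) h3 (Nat.odd_iff.mp ho)]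
end

section
variable {n : ℕ} (hn : 3 ≤ n) {a b : Fin n → Fin n}
variable (hab : ∀ k : Fin n, 3 ≤ (k : ℕ) → (a k : ℕ) < k ∧ (b k : ℕ) < k ∧ a k ≠ b k)

include hab in
lemma gE_base_ne {i j : ℕ} (h3i : i < 3) (h3j : 3 ≤ j) (hj : j < 2*n-3) :
    gE n hn a b i ≠ gE n hn a b j := by
  have h0 : 0 < n := by omega
  intro h
  have hkj : (j+3)/2 < n := by omega
  have hKj : (Vx n h0 ((j+3)/2) : ℕ) = (j+3)/2 := Vx_val h0 hkj
  have habj := hab (Vx n h0 ((j+3)/2)) (by omega)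
  obtain ⟨ha1, hb1, -⟩ := habj
  rcases Nat.even_or_odd j with he | ho
  · rw [gE_even hn a b h0 h3j (Nat.even_iff.mp he)] at h
    interval_cases i <;>
      simp only [gE_0, gE_1, gE_2, Sym2.eq_iff, Fin.ext_iff, Fin.val_mk] at h <;> omega
  · rw [gE_odd hn a b h0 h3j (Nat.odd_iff.mp ho)] at h
    interval_cases i <;>
      simp only [gE_0, gE_1, gE_2, Sym2.eq_iff, Fin.ext_iff, Fin.val_mk] at h <;> omega

include hab in
lemma gE_inj {i j : ℕ} (hi : i < 2*n-3) (hj : j < 2*n-3)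
    (h : gE n hn a b i = gE n hn a b j) : i = j := by
  have h0 : 0 < n := by omega
  rcases Nat.lt_or_ge i 3 with h3i | h3i <;> rcases Nat.lt_or_ge j 3 with h3j | h3j
  · interval_cases i <;> interval_cases j <;>
      simp only [gE_0, gE_1, gE_2, Sym2.eq_iff, Fin.ext_iff, Fin.val_mk] at h <;> omega
  · exact absurd h (gE_base_ne hn hab h3i h3j hj)
  · exact absurd h.symm (gE_base_ne hn hab h3j h3i hi)
  · have hvi : (Vx n h0 ((i+3)/2) : ℕ) = (i+3)/2 := Vx_val h0 (by omega)
    have hvj : (Vx n h0 ((j+3)/2) : ℕ) = (j+3)/2 := Vx_val h0 (by omega)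
    obtain ⟨hai, hbi, habi⟩ := hab (Vx n h0 ((i+3)/2)) (by omega)
    obtain ⟨haj, hbj, habj⟩ := hab (Vx n h0 ((j+3)/2)) (by omega)
    have hVij : (i+3)/2 = (j+3)/2 → Vx n h0 ((i+3)/2) = Vx n h0 ((j+3)/2) :=
      fun hk => by rw [hk]
    rcases Nat.even_or_odd i with hei | hoi <;> rcases Nat.even_or_odd j with hej | hoj
    · rw [gE_even hn a b h0 h3i (Nat.even_iff.mp hei),
        gE_even hn a b h0 h3j (Nat.even_iff.mp hej), Sym2.eq_iff] at h
      rcases h with ⟨h1, h2⟩ | ⟨h1, h2⟩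
      · have := congrArg Fin.val h1
        have hp := Nat.even_iff.mp hei; have hq := Nat.even_iff.mp hej
        omega
      · have := congrArg Fin.val h1; have := congrArg Fin.val h2; omega
    · rw [gE_even hn a b h0 h3i (Nat.even_iff.mp hei),
        gE_odd hn a b h0 h3j (Nat.odd_iff.mp hoj), Sym2.eq_iff] at h
      rcases h with ⟨h1, h2⟩ | ⟨h1, h2⟩
      · have hk : (i+3)/2 = (j+3)/2 := by
          have := congrArg Fin.val h1; omega
        rw [← hVij hk] at h2
        exact absurd h2.symm habi
      · have := congrArg Fin.val h1; have := congrArg Fin.val h2; omega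
    · rw [gE_odd hn a b h0 h3i (Nat.odd_iff.mp hoi),
        gE_even hn a b h0 h3j (Nat.even_iff.mp hej), Sym2.eq_iff] at h
      rcases h with ⟨h1, h2⟩ | ⟨h1, h2⟩
      · have hk : (i+3)/2 = (j+3)/2 := by
          have := congrArg Fin.val h1; omega
        rw [← hVij hk] at h2
        exact absurd h2 habi
      · have := congrArg Fin.val h1; have := congrArg Fin.val h2; omega
    · rw [gE_odd hn a b h0 h3i (Nat.odd_iff.mp hoi),
        gE_odd hn a b h0 h3j (Nat.odd_iff.mp hoj), Sym2.eq_iff] at h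
      rcases h with ⟨h1, h2⟩ | ⟨h1, h2⟩
      · have := congrArg Fin.val h1
        have hp := Nat.odd_iff.mp hoi; have hq := Nat.odd_iff.mp hoj
        omega
      · have := congrArg Fin.val h1; have := congrArg Fin.val h2; omega
end

section
variable {n : ℕ} (hn : 3 ≤ n) {a b : Fin n → Fin n}
variable (hab : ∀ k : Fin n, 3 ≤ (k : ℕ) → (a k : ℕ) < k ∧ (b k : ℕ) < k ∧ a k ≠ b k)

include hab in
lemma edgeMS_eq :
    edgeMS (SimpleGraph.fromEdgeSet (mopEdges n hn a b)) =
      Multiset.map (gE n hn a b) (Multiset.range (2*n-3)) := by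
  have hnd1 : (edgeMS (SimpleGraph.fromEdgeSet (mopEdges n hn a b))).Nodup :=
    nodup_edgeMS _
  have hnd2 : (Multiset.map (gE n hn a b) (Multiset.range (2*n-3))).Nodup := by
    refine Multiset.Nodup.map_on ?_ (Multiset.nodup_range _)
    intro x hx y hy hxy
    exact gE_inj hn hab (Multiset.mem_range.mp hx) (Multiset.mem_range.mp hy) hxy
  rw [Multiset.Nodup.ext hnd1 hnd2]
  intro e
  rw [mem_edgeMS, mop_edgeSet hn hab, mem_mop_iff_gE hn]
  simp only [Multiset.mem_map, Multiset.mem_range]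

include hab in
lemma edgeMS_card :
    Multiset.card (edgeMS (SimpleGraph.fromEdgeSet (mopEdges n hn a b))) = 2*n-3 := by
  rw [edgeMS_eq hn hab]
  simp

variable (hab2 : ∀ k : Fin n, 3 ≤ (k : ℕ) → s(a k, b k) ∈ mopEdges n hn a b)

include hab hab2 in
lemma sG_nonempty :
    ∃ D : Multiset (Sym2 (Fin n)),
      (∀ e ∈ D, e ∈ (SimpleGraph.fromEdgeSet (mopEdges n hn a b)).edgeSet) ∧
      TriDecomp (edgeMS (SimpleGraph.fromEdgeSet (mopEdges n hn a b)) + D) := by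
  classical
  set G := SimpleGraph.fromEdgeSet (mopEdges n hn a b) with hG
  set tri0 : Multiset (Sym2 (Fin n)) :=
    {s((⟨0, by omega⟩ : Fin n), ⟨1, by omega⟩), s((⟨1, by omega⟩ : Fin n), ⟨2, by omega⟩),
     s((⟨0, by omega⟩ : Fin n), ⟨2, by omega⟩)} with htri0
  set trik : Fin n → Multiset (Sym2 (Fin n)) :=
    fun k => {s(k, a k), s(a k, b k), s(k, b k)} with htrik
  set T : Multiset (Multiset (Sym2 (Fin n))) :=
    Multiset.replicate 3 tri0 +
      (Finset.univ.filter (fun k : Fin n => 3 ≤ (k : ℕ))).val.bind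
        (fun k => Multiset.replicate 3 (trik k)) with hT
  have hTmem : ∀ t ∈ T, t = tri0 ∨ ∃ k : Fin n, 3 ≤ (k : ℕ) ∧ t = trik k := by
    intro t ht
    rw [hT, Multiset.mem_add] at ht
    rcases ht with ht | ht
    · exact Or.inl (Multiset.eq_of_mem_replicate ht)
    · rw [Multiset.mem_bind] at ht
      obtain ⟨k, hk, ht⟩ := ht
      refine Or.inr ⟨k, ?_, Multiset.eq_of_mem_replicate ht⟩
      have hk' := Finset.mem_filter.mp (Finset.mem_val.mp hk)
      simpa using hk'.2
  have hTtri : ∀ t ∈ T, IsTriangle t := by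
    intro t ht
    rcases hTmem t ht with rfl | ⟨k, hk, rfl⟩
    · exact ⟨_, _, _, by simp [Fin.ext_iff], by simp [Fin.ext_iff],
        by simp [Fin.ext_iff], rfl⟩
    · obtain ⟨h1, h2, h3⟩ := hab k hk
      exact ⟨k, a k, b k, by intro h; rw [← h] at h1; omega,
        h3, by intro h; rw [← h] at h2; omega, rfl⟩
  have hTedges : ∀ e ∈ T.sum, e ∈ G.edgeSet := by
    intro e he
    rw [mem_msum] at he
    obtain ⟨t, ht, he⟩ := he
    rw [mop_edgeSet hn hab]
    rcases hTmem t ht with rfl | ⟨k, hk, rfl⟩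
    · rw [htri0] at he
      rcases Multiset.mem_cons.mp he with rfl | he
      · exact Or.inl rfl
      rcases Multiset.mem_cons.mp he with rfl | he
      · exact Or.inr (Or.inl rfl)
      rcases Multiset.mem_singleton.mp he with rfl
      · exact Or.inr (Or.inr (Or.inl rfl))
    · rw [htrik] at he
      rcases Multiset.mem_cons.mp he with rfl | he
      · exact Or.inr (Or.inr (Or.inr ⟨k, hk, Or.inl rfl⟩))
      rcases Multiset.mem_cons.mp he with rfl | he
      · exact hab2 k hk
      rcases Multiset.mem_singleton.mp he with rfl
      · exact Or.inr (Or.inr (Or.inr ⟨k, hk, Or.inr rfl⟩))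
  have hle : edgeMS G ≤ T.sum := by
    rw [Multiset.le_iff_count]
    intro e
    by_cases he : e ∈ edgeMS G
    · have h1 : Multiset.count e (edgeMS G) ≤ 1 :=
        Multiset.nodup_iff_count_le_one.mp (nodup_edgeMS G) e
      have h2 : e ∈ T.sum := by
        rw [mem_msum]
        have heG : e ∈ G.edgeSet := mem_edgeMS.mp he
        rw [mop_edgeSet hn hab] at heG
        rcases heG with rfl | rfl | rfl | ⟨k, hk, rfl | rfl⟩
        · exact ⟨tri0, by rw [hT]; simp, by rw [htri0]; simp⟩
        · exact ⟨tri0, by rw [hT]; simp, by rw [htri0]; simp⟩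
        · exact ⟨tri0, by rw [hT]; simp, by rw [htri0]; simp⟩
        · refine ⟨trik k, ?_, by rw [htrik]; simp⟩
          rw [hT]; simp only [Multiset.mem_add, Multiset.mem_bind]
          exact Or.inr ⟨k, by simp [hk], Multiset.mem_replicate.mpr ⟨by omega, rfl⟩⟩
        · refine ⟨trik k, ?_, by rw [htrik]; simp⟩
          rw [hT]; simp only [Multiset.mem_add, Multiset.mem_bind]
          exact Or.inr ⟨k, by simp [hk], Multiset.mem_replicate.mpr ⟨by omega, rfl⟩⟩
      calc Multiset.count e (edgeMS G) ≤ 1 := h1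
        _ ≤ Multiset.count e T.sum := Multiset.one_le_count_iff_mem.mpr h2
    · rw [Multiset.count_eq_zero_of_notMem he]; omega
  refine ⟨T.sum - edgeMS G, ?_, T, hTtri, ?_⟩
  · intro e he
    exact hTedges e (Multiset.mem_of_le tsub_le_self he)
  · rw [add_comm, tsub_add_cancel_of_le hle]
end

/-! ### The explicit construction for `n ≡ 1 (mod 3)` -/

def Af (k : ℕ) : ℕ := if k % 3 = 1 then k-3 else k-4
def Bf (k : ℕ) : ℕ := if k % 3 = 1 then k-2 else if k % 3 = 2 then k-1 else k-2

noncomputable def aC (n : ℕ) (h0 : 0 < n) : Fin n → Fin n := fun k => Vx n h0 (Af (k : ℕ))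
noncomputable def bC (n : ℕ) (h0 : 0 < n) : Fin n → Fin n := fun k => Vx n h0 (Bf (k : ℕ))

lemma Af_lt {k : ℕ} (h : 3 ≤ k) : Af k < k := by rw [Af]; split_ifs <;> omega
lemma Bf_lt {k : ℕ} (h : 3 ≤ k) : Bf k < k := by rw [Bf]; split_ifs <;> omega
lemma ABf_ne {k : ℕ} (h : 3 ≤ k) : Af k ≠ Bf k := by rw [Af, Bf]; split_ifs <;> omega

section
variable {n : ℕ} (hn : 3 ≤ n) (h0 : 0 < n)

lemma aC_apply {k : Fin n} : aC n h0 k = Vx n h0 (Af (k : ℕ)) := rfl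
lemma bC_apply {k : Fin n} : bC n h0 k = Vx n h0 (Bf (k : ℕ)) := rfl

lemma aC_val {k : Fin n} (h3 : 3 ≤ (k : ℕ)) : (aC n h0 k : ℕ) = Af (k : ℕ) :=
  Vx_val h0 (lt_trans (Af_lt h3) k.isLt)

lemma bC_val {k : Fin n} (h3 : 3 ≤ (k : ℕ)) : (bC n h0 k : ℕ) = Bf (k : ℕ) :=
  Vx_val h0 (lt_trans (Bf_lt h3) k.isLt)

lemma aC_Vx {v : ℕ} (hv : v < n) : aC n h0 (Vx n h0 v) = Vx n h0 (Af v) := by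
  rw [aC_apply, Vx_val h0 hv]

lemma bC_Vx {v : ℕ} (hv : v < n) : bC n h0 (Vx n h0 v) = Vx n h0 (Bf v) := by
  rw [bC_apply, Vx_val h0 hv]

lemma habC : ∀ k : Fin n, 3 ≤ (k : ℕ) →
    (aC n h0 k : ℕ) < k ∧ (bC n h0 k : ℕ) < k ∧ aC n h0 k ≠ bC n h0 k := by
  intro k h3
  refine ⟨by rw [aC_val h0 h3]; exact Af_lt h3, by rw [bC_val h0 h3]; exact Bf_lt h3, ?_⟩
  intro h
  have := congrArg Fin.val h
  rw [aC_val h0 h3, bC_val h0 h3] at this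
  exact ABf_ne h3 this

lemma hab2C : ∀ k : Fin n, 3 ≤ (k : ℕ) →
    s(aC n h0 k, bC n h0 k) ∈ mopEdges n hn (aC n h0) (bC n h0) := by
  intro k h3
  have hkn := k.isLt
  rw [aC_apply, bC_apply]
  rcases (show (k:ℕ) % 3 = 0 ∨ (k:ℕ) % 3 = 1 ∨ (k:ℕ) % 3 = 2 by omega) with hm | hm | hm
  · rcases (show (k:ℕ) = 3 ∨ 6 ≤ (k:ℕ) by omega) with h4 | h4
    · -- attach to edge (0,1): base edge
      left
      rw [show Af (k:ℕ) = 0 by rw [Af]; split_ifs <;> omega,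
          show Bf (k:ℕ) = 1 by rw [Bf]; split_ifs <;> omega,
          Vx_eq_k (k := ⟨0, by omega⟩) h0 rfl, Vx_eq_k (k := ⟨1, by omega⟩) h0 rfl]
    · -- s(k-4, k-2) = s(l, bC l), l = Vx (k-2)
      refine Or.inr (Or.inr (Or.inr ⟨Vx n h0 ((k:ℕ)-2), by rw [Vx_val h0 (by omega)]; omega,
        Or.inr ?_⟩))
      rw [bC_Vx h0 (by omega),
        show Af (k:ℕ) = Bf ((k:ℕ)-2) by rw [Af, Bf]; split_ifs <;> omega,
        show Bf (k:ℕ) = (k:ℕ)-2 by rw [Bf]; split_ifs <;> omega]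
      exact Sym2.eq_swap
  · rcases (show (k:ℕ) = 4 ∨ 7 ≤ (k:ℕ) by omega) with h4 | h4
    · -- attach to edge (1,2): base edge
      right; left
      rw [show Af (k:ℕ) = 1 by rw [Af]; split_ifs <;> omega,
          show Bf (k:ℕ) = 2 by rw [Bf]; split_ifs <;> omega,
          Vx_eq_k (k := ⟨1, by omega⟩) h0 rfl, Vx_eq_k (k := ⟨2, by omega⟩) h0 rfl]
    · -- s(k-3, k-2) = s(l, bC l), l = Vx (k-2)
      refine Or.inr (Or.inr (Or.inr ⟨Vx n h0 ((k:ℕ)-2), by rw [Vx_val h0 (by omega)]; omega,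
        Or.inr ?_⟩))
      rw [bC_Vx h0 (by omega),
        show Af (k:ℕ) = Bf ((k:ℕ)-2) by rw [Af, Bf]; split_ifs <;> omega,
        show Bf (k:ℕ) = (k:ℕ)-2 by rw [Bf]; split_ifs <;> omega]
      exact Sym2.eq_swap
  · -- s(k-4, k-1) = s(l, aC l), l = Vx (k-1)
    refine Or.inr (Or.inr (Or.inr ⟨Vx n h0 ((k:ℕ)-1), by rw [Vx_val h0 (by omega)]; omega,
      Or.inl ?_⟩))
    rw [aC_Vx h0 (by omega),
      show Af (k:ℕ) = Af ((k:ℕ)-1) by rw [Af, Af]; split_ifs <;> omega,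
      show Bf (k:ℕ) = (k:ℕ)-1 by rw [Bf]; split_ifs <;> omega]
    exact Sym2.eq_swap

lemma hab3C : ∀ k l : Fin n, 3 ≤ (k : ℕ) → 3 ≤ (l : ℕ) → k ≠ l →
    s(aC n h0 k, bC n h0 k) ≠ s(aC n h0 l, bC n h0 l) := by
  intro k l h3k h3l hkl h
  have hklv : (k:ℕ) ≠ (l:ℕ) := fun hv => hkl (Fin.ext hv)
  rw [Sym2.eq_iff] at h
  have hv : (Af (k:ℕ) = Af (l:ℕ) ∧ Bf (k:ℕ) = Bf (l:ℕ)) ∨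
      (Af (k:ℕ) = Bf (l:ℕ) ∧ Bf (k:ℕ) = Af (l:ℕ)) := by
    rcases h with ⟨h1, h2⟩ | ⟨h1, h2⟩
    · left
      constructor
      · have := congrArg Fin.val h1; rwa [aC_val h0 h3k, aC_val h0 h3l] at this
      · have := congrArg Fin.val h2; rwa [bC_val h0 h3k, bC_val h0 h3l] at this
    · right
      constructor
      · have := congrArg Fin.val h1; rwa [aC_val h0 h3k, bC_val h0 h3l] at this
      · have := congrArg Fin.val h2; rwa [bC_val h0 h3k, aC_val h0 h3l] at this
  rw [Af, Af, Bf, Bf] at hv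
  split_ifs at hv <;> omega

end

section
variable {n : ℕ} (hn : 3 ≤ n) (h0 : 0 < n)

lemma Vx_ne {u v : ℕ} (hu : u < n) (hv : v < n) (huv : u ≠ v) :
    Vx n h0 u ≠ Vx n h0 v := by
  intro h
  have := congrArg Fin.val h
  rw [Vx_val h0 hu, Vx_val h0 hv] at this
  exact huv this

lemma gE_odd_val {i u v : ℕ} (h3 : 3 ≤ i) (hp : i % 2 = 1) (hk : (i+3)/2 = u)
    (hu : u < n) (hA : Af u = v) :
    gE n hn (aC n h0) (bC n h0) i = s(Vx n h0 u, Vx n h0 v) := by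
  rw [gE_odd hn _ _ h0 h3 hp, hk, aC_Vx h0 hu, hA]

lemma gE_even_val {i u v : ℕ} (h3 : 3 ≤ i) (hp : i % 2 = 0) (hk : (i+3)/2 = u)
    (hu : u < n) (hB : Bf u = v) :
    gE n hn (aC n h0) (bC n h0) i = s(Vx n h0 u, Vx n h0 v) := by
  rw [gE_even hn _ _ h0 h3 hp, hk, bC_Vx h0 hu, hB]

lemma gE_0v : gE n hn (aC n h0) (bC n h0) 0 = s(Vx n h0 0, Vx n h0 1) := by
  rw [gE_0 hn, Vx_eq_k (k := ⟨0, by omega⟩) h0 rfl, Vx_eq_k (k := ⟨1, by omega⟩) h0 rfl]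

lemma gE_1v : gE n hn (aC n h0) (bC n h0) 1 = s(Vx n h0 1, Vx n h0 2) := by
  rw [gE_1 hn, Vx_eq_k (k := ⟨1, by omega⟩) h0 rfl, Vx_eq_k (k := ⟨2, by omega⟩) h0 rfl]

lemma gE_2v : gE n hn (aC n h0) (bC n h0) 2 = s(Vx n h0 0, Vx n h0 2) := by
  rw [gE_2 hn, Vx_eq_k (k := ⟨0, by omega⟩) h0 rfl, Vx_eq_k (k := ⟨2, by omega⟩) h0 rfl]

lemma range_peel (m : ℕ) : Multiset.range (m+1) = m ::ₘ Multiset.range m :=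
  Multiset.range_succ m

lemma decomp_aux : ∀ t : ℕ, 3*t+4 ≤ n →
    ∃ T : Multiset (Multiset (Sym2 (Fin n))), (∀ tr ∈ T, IsTriangle tr) ∧
      T.sum = Multiset.map (gE n hn (aC n h0) (bC n h0)) (Multiset.range (6*t+5)) +
        {s(Vx n h0 0, Vx n h0 1)} := by
  intro t
  induction t with
  | zero =>
    intro ht
    refine ⟨{ {s(Vx n h0 0, Vx n h0 1), s(Vx n h0 1, Vx n h0 2), s(Vx n h0 0, Vx n h0 2)},
      {s(Vx n h0 3, Vx n h0 0), s(Vx n h0 0, Vx n h0 1), s(Vx n h0 3, Vx n h0 1)} }, ?_, ?_⟩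
    · intro tr htr
      rcases Multiset.mem_cons.mp htr with rfl | htr
      · exact ⟨_, _, _, Vx_ne h0 (by omega) (by omega) (by omega),
          Vx_ne h0 (by omega) (by omega) (by omega),
          Vx_ne h0 (by omega) (by omega) (by omega), rfl⟩
      rcases Multiset.mem_singleton.mp htr with rfl
      · exact ⟨_, _, _, Vx_ne h0 (by omega) (by omega) (by omega),
          Vx_ne h0 (by omega) (by omega) (by omega),
          Vx_ne h0 (by omega) (by omega) (by omega), rfl⟩
    · have hr : Multiset.range 5 = 4 ::ₘ 3 ::ₘ 2 ::ₘ 1 ::ₘ 0 ::ₘ 0 := by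
        rw [show (5:ℕ) = 4+1 by omega, range_peel, show (4:ℕ) = 3+1 by omega, range_peel,
          show (3:ℕ) = 2+1 by omega, range_peel, show (2:ℕ) = 1+1 by omega, range_peel,
          show (1:ℕ) = 0+1 by omega, range_peel, Multiset.range_zero]
      rw [hr]
      simp only [Multiset.insert_eq_cons, Multiset.map_cons, Multiset.map_zero,
        Multiset.sum_cons, Multiset.sum_zero, Multiset.sum_singleton, add_zero,
        gE_0v hn h0, gE_1v hn h0, gE_2v hn h0,
        gE_odd_val hn h0 (i := 3) (u := 3) (v := 0) (by omega) (by omega) (by omega)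
          (by omega) (by rw [Af]; split_ifs <;> omega),
        gE_even_val hn h0 (i := 4) (u := 3) (v := 1) (by omega) (by omega) (by omega)
          (by omega) (by rw [Bf]; split_ifs <;> omega)]
      simp only [← Multiset.singleton_add]
      abel
  | succ t ih =>
    intro ht
    obtain ⟨T, hT, hsum⟩ := ih (by omega)
    refine ⟨{s(Vx n h0 (3*t+5), Vx n h0 (3*t+4)), s(Vx n h0 (3*t+4), Vx n h0 (3*t+1)),
        s(Vx n h0 (3*t+5), Vx n h0 (3*t+1))} ::ₘ
      {s(Vx n h0 (3*t+6), Vx n h0 (3*t+4)), s(Vx n h0 (3*t+4), Vx n h0 (3*t+2)),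
        s(Vx n h0 (3*t+6), Vx n h0 (3*t+2))} ::ₘ T, ?_, ?_⟩
    · intro tr htr
      rcases Multiset.mem_cons.mp htr with rfl | htr
      · exact ⟨_, _, _, Vx_ne h0 (by omega) (by omega) (by omega),
          Vx_ne h0 (by omega) (by omega) (by omega),
          Vx_ne h0 (by omega) (by omega) (by omega), rfl⟩
      rcases Multiset.mem_cons.mp htr with rfl | htr
      · exact ⟨_, _, _, Vx_ne h0 (by omega) (by omega) (by omega),
          Vx_ne h0 (by omega) (by omega) (by omega),
          Vx_ne h0 (by omega) (by omega) (by omega), rfl⟩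
      · exact hT tr htr
    · have h6 : Multiset.range (6*(t+1)+5) = (6*t+10) ::ₘ Multiset.range (6*t+10) := by
        rw [show 6*(t+1)+5 = (6*t+10)+1 by omega]; exact range_peel _
      have h5 : Multiset.range (6*t+10) = (6*t+9) ::ₘ Multiset.range (6*t+9) := by
        rw [show 6*t+10 = (6*t+9)+1 by omega]; exact range_peel _
      have h4 : Multiset.range (6*t+9) = (6*t+8) ::ₘ Multiset.range (6*t+8) := by
        rw [show 6*t+9 = (6*t+8)+1 by omega]; exact range_peel _
      have h3 : Multiset.range (6*t+8) = (6*t+7) ::ₘ Multiset.range (6*t+7) := by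
        rw [show 6*t+8 = (6*t+7)+1 by omega]; exact range_peel _
      have h2 : Multiset.range (6*t+7) = (6*t+6) ::ₘ Multiset.range (6*t+6) := by
        rw [show 6*t+7 = (6*t+6)+1 by omega]; exact range_peel _
      have h1 : Multiset.range (6*t+6) = (6*t+5) ::ₘ Multiset.range (6*t+5) := by
        rw [show 6*t+6 = (6*t+5)+1 by omega]; exact range_peel _
      rw [h6, h5, h4, h3, h2, h1]
      simp only [Multiset.insert_eq_cons, Multiset.map_cons, Multiset.sum_cons]
      rw [hsum,
        gE_odd_val hn h0 (i := 6*t+5) (u := 3*t+4) (v := 3*t+1) (by omega) (by omega)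
          (by omega) (by omega) (by rw [Af]; split_ifs <;> omega),
        gE_even_val hn h0 (i := 6*t+6) (u := 3*t+4) (v := 3*t+2) (by omega) (by omega)
          (by omega) (by omega) (by rw [Bf]; split_ifs <;> omega),
        gE_odd_val hn h0 (i := 6*t+7) (u := 3*t+5) (v := 3*t+1) (by omega) (by omega)
          (by omega) (by omega) (by rw [Af]; split_ifs <;> omega),
        gE_even_val hn h0 (i := 6*t+8) (u := 3*t+5) (v := 3*t+4) (by omega) (by omega)
          (by omega) (by omega) (by rw [Bf]; split_ifs <;> omega),
        gE_odd_val hn h0 (i := 6*t+9) (u := 3*t+6) (v := 3*t+2) (by omega) (by omega)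
          (by omega) (by omega) (by rw [Af]; split_ifs <;> omega),
        gE_even_val hn h0 (i := 6*t+10) (u := 3*t+6) (v := 3*t+4) (by omega) (by omega)
          (by omega) (by omega) (by rw [Bf]; split_ifs <;> omega)]
      simp only [← Multiset.singleton_add]
      abel

end

lemma construction {n : ℕ} (hn : 3 ≤ n) (hm : n % 3 = 1) :
    ∃ G : SimpleGraph (Fin n), IsMOP G ∧ ∃ e ∈ G.edgeSet, TriDecomp (edgeMS G + {e}) := by
  have h0 : 0 < n := by omega
  refine ⟨SimpleGraph.fromEdgeSet (mopEdges n hn (aC n h0) (bC n h0)),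
    ⟨hn, aC n h0, bC n h0, habC h0, hab2C hn h0, hab3C h0, rfl⟩,
    s(Vx n h0 0, Vx n h0 1), ?_, ?_⟩
  · rw [mop_edgeSet hn (habC h0)]
    left
    rw [Vx_eq_k (k := ⟨0, by omega⟩) h0 rfl, Vx_eq_k (k := ⟨1, by omega⟩) h0 rfl]
  · obtain ⟨T, hT, hsum⟩ := decomp_aux hn h0 ((n-4)/3) (by omega)
    refine ⟨T, hT, ?_⟩
    rw [hsum, edgeMS_eq hn (habC h0), show 2*n-3 = 6*((n-4)/3)+5 by omega]


/-- For every `n ≥ 3`, `n ≡ 1 (mod 3)` iff `ε_Δ(OP_n) = 1`; in particular, for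
`n ≡ 1 (mod 3)` some maximal outerplanar graph of order `n` becomes triangle decomposable
after duplicating a single edge, while no maximal outerplanar graph of order `n` is itself
triangle decomposable. -/
theorem eps_OP_eq_one_iff (n : ℕ) (hn : 3 ≤ n) :
    (n % 3 = 1 ↔ epsOP n = 1) ∧
    (n % 3 = 1 →
      (∃ G : SimpleGraph (Fin n), IsMOP G ∧
        ∃ e ∈ G.edgeSet, TriDecomp (edgeMS G + {e})) ∧
      (∀ G : SimpleGraph (Fin n), IsMOP G → ¬ TriDecomp (edgeMS G))) := by
  have hcard : ∀ G : SimpleGraph (Fin n), IsMOP G →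
      Multiset.card (edgeMS G) = 2*n-3 := by
    rintro G ⟨hn', a, b, hab, hab2, hab3, rfl⟩
    exact edgeMS_card hn' hab
  have hnotdec : n % 3 = 1 → ∀ G : SimpleGraph (Fin n), IsMOP G →
      ¬ TriDecomp (edgeMS G) := by
    intro hm G hG hdec
    have h3 := triDecomp_dvd hdec
    rw [hcard G hG] at h3
    omega
  have hSne : ∀ G : SimpleGraph (Fin n), IsMOP G →
      {k | ∃ D : Multiset (Sym2 (Fin n)), Multiset.card D = k ∧
        (∀ e ∈ D, e ∈ G.edgeSet) ∧ TriDecomp (edgeMS G + D)}.Nonempty := by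
    rintro G ⟨hn', a, b, hab, hab2, hab3, rfl⟩
    obtain ⟨D, hD1, hD2⟩ := sG_nonempty hn' hab hab2
    exact ⟨Multiset.card D, D, rfl, hD1, hD2⟩
  have hzero : ∀ G : SimpleGraph (Fin n), n % 3 = 1 → IsMOP G → epsDelta G ≠ 0 := by
    intro G hm hG h
    rw [epsDelta, Nat.sInf_eq_zero] at h
    rcases h with h | h
    · obtain ⟨D, hD0, -, hdec⟩ := h
      rw [Multiset.card_eq_zero] at hD0
      subst hD0
      rw [add_zero] at hdec
      exact hnotdec hm G hG hdec
    · exact absurd h (Set.nonempty_iff_ne_empty.mp (hSne G hG))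
  constructor
  · constructor
    · intro hm
      obtain ⟨G, hG, e, he, hdec⟩ := construction hn hm
      have h1mem : 1 ∈ {k | ∃ D : Multiset (Sym2 (Fin n)), Multiset.card D = k ∧
          (∀ e ∈ D, e ∈ G.edgeSet) ∧ TriDecomp (edgeMS G + D)} :=
        ⟨{e}, by simp, by simpa using he, hdec⟩
      have hepsG : epsDelta G = 1 := by
        have hle : epsDelta G ≤ 1 := Nat.sInf_le h1mem
        have hne := hzero G hm hG
        omega
      have h1memO : 1 ∈ {m | ∃ G : SimpleGraph (Fin n), IsMOP G ∧ epsDelta G = m} :=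
        ⟨G, hG, hepsG⟩
      have hleO : epsOP n ≤ 1 := Nat.sInf_le h1memO
      have hneO : epsOP n ≠ 0 := by
        intro h
        rw [epsOP, Nat.sInf_eq_zero] at h
        rcases h with h | h
        · obtain ⟨G', hG', hG'0⟩ := h
          exact hzero G' hm hG' hG'0
        · exact absurd h (Set.nonempty_iff_ne_empty.mp ⟨1, h1memO⟩)
      omega
    · intro h
      have hO : {m | ∃ G : SimpleGraph (Fin n), IsMOP G ∧ epsDelta G = m}.Nonempty := by
        by_contra h'
        rw [Set.not_nonempty_iff_eq_empty] at h'
        rw [epsOP, h', Nat.sInf_empty] at h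
        omega
      have hmem := Nat.sInf_mem hO
      rw [show sInf {m | ∃ G : SimpleGraph (Fin n), IsMOP G ∧ epsDelta G = m} = epsOP n
        from rfl, h] at hmem
      obtain ⟨G, hG, hG1⟩ := hmem
      have hSneG := hSne G hG
      have hmemS := Nat.sInf_mem hSneG
      rw [show sInf {k | ∃ D : Multiset (Sym2 (Fin n)), Multiset.card D = k ∧
          (∀ e ∈ D, e ∈ G.edgeSet) ∧ TriDecomp (edgeMS G + D)} = epsDelta G from rfl,
        hG1] at hmemS
      obtain ⟨D, hDcard, -, hdec⟩ := hmemS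
      have h3 := triDecomp_dvd hdec
      rw [Multiset.card_add, hcard G hG, hDcard] at h3
      omega
  · intro hm
    exact ⟨construction hn hm, hnotdec hm⟩
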